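/- For every real ε > 0 there exists N such that for all n ≥ N there is a k with k ≤ 81.28·(1+ε)·(log n / log 2) and a 3-covering array with k rows and n columns over the alphabet Fin 4; i.e., a matrix M : Fin k → Fin n → Fin 4 such that for every injective tuple of 3 column indices c : Fin 3 → Fin n and every word w : Fin 3 → Fin 4 there exists a row r : Fin k with M r (c i) = w i for all i : Fin 3. -/

import Mathlib

open Finset

/-- The 12 even permutations of `Fin 4`, as functions. -/
def Gp : Fin 12 → Fin 4 → Fin 4 :=
  ![![0,1,2,3], ![1,0,3,2], ![2,3,0,1], ![3,2,1,0],
    ![1,2,0,3], ![2,0,1,3], ![1,3,2,0], ![3,0,2,1],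
    ![2,1,3,0], ![3,1,0,2], ![0,2,3,1], ![0,3,1,2]]

/-- Their inverses. -/
def Gpinv : Fin 12 → Fin 4 → Fin 4 :=
  ![![0,1,2,3], ![1,0,3,2], ![2,3,0,1], ![3,2,1,0],
    ![2,0,1,3], ![1,2,0,3], ![3,0,2,1], ![1,3,2,0],
    ![3,1,0,2], ![2,1,3,0], ![0,3,1,2], ![0,2,3,1]]

lemma Gp_inv : ∀ s x, Gp s (Gpinv s x) = x := by decide

lemma Gp_free : ∀ s t : Fin 12, ∀ a b c : Fin 4, ¬(a = b ∧ b = c) →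
    Gpinv s a = Gpinv t a → Gpinv s b = Gpinv t b → Gpinv s c = Gpinv t c → s = t := by decide
open Finset

/-- Counting functions whose restriction to an injective triple satisfies `Q`. -/
lemma count_comp {n' : ℕ} (c : Fin 3 → Fin n') (hc : Function.Injective c)
    (Q : (Fin 3 → Fin 4) → Prop) [DecidablePred Q] :
    Fintype.card {f : Fin n' → Fin 4 // Q (f ∘ c)} =
      Fintype.card {u : Fin 3 → Fin 4 // Q u} * 4 ^ (n' - 3) := by
  classical
  let E : (Fin n' → Fin 4) ≃ (Fin 3 → Fin 4) × ({x : Fin n' // ¬ x ∈ Set.range c} → Fin 4) :=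
    (Equiv.piEquivPiSubtypeProd (· ∈ Set.range c) fun _ => Fin 4).trans
      (Equiv.prodCongr (((Equiv.ofInjective c hc).arrowCongr (Equiv.refl (Fin 4))).symm)
        (Equiv.refl _))
  have hE : ∀ f, (E f).1 = f ∘ c := by
    intro f; funext i; rfl
  have e1 : {f : Fin n' → Fin 4 // Q (f ∘ c)} ≃
      {x : (Fin 3 → Fin 4) × ({x : Fin n' // ¬ x ∈ Set.range c} → Fin 4) // Q x.1} :=
    E.subtypeEquiv (fun f => by rw [hE])
  have e2 : {x : (Fin 3 → Fin 4) × ({x : Fin n' // ¬ x ∈ Set.range c} → Fin 4) // Q x.1} ≃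
      {u : Fin 3 → Fin 4 // Q u} × ({x : Fin n' // ¬ x ∈ Set.range c} → Fin 4) :=
    Equiv.prodSubtypeFstEquivSubtypeProd
  rw [Fintype.card_congr (e1.trans e2), Fintype.card_prod, Fintype.card_fun]
  congr 2
  rw [Fintype.card_subtype_compl]
  have h3 : Fintype.card {x : Fin n' // x ∈ Set.range c} = 3 := by
    have h := Set.card_range_of_injective hc
    rw [Fintype.card_fin] at h
    exact (Fintype.card_congr (Equiv.refl _)).trans h
  rw [h3, Fintype.card_fin]

lemma pow_count {m : ℕ} {F : Type*} [Fintype F] (P : F → Prop) [DecidablePred P] :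
    Fintype.card {M : Fin m → F // ∀ j, P (M j)} = (Fintype.card {f : F // P f}) ^ m := by
  rw [Fintype.card_congr (Equiv.subtypePiEquivPi (p := fun _ : Fin m => P))]
  simp [Fintype.card_pi]

/-- Single-row bound: the number of rows failing to cover `(c, w)` (for nonconstant `w`)
through all 12 permutations is at most `52 * 4 ^ (n' - 3)`. -/
lemma row_bound {n' : ℕ} (c : Fin 3 → Fin n') (hc : Function.Injective c)
    (w : Fin 3 → Fin 4) (hw : ¬(w 0 = w 1 ∧ w 1 = w 2)) :
    Fintype.card {f : Fin n' → Fin 4 // ∀ s, ¬ ∀ i, Gp s (f (c i)) = w i} ≤ 52 * 4 ^ (n' - 3) := by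
  classical
  have key := count_comp c hc (fun u => ∀ s, ¬ ∀ i, Gp s (u i) = w i)
  have : Fintype.card {u : Fin 3 → Fin 4 // ∀ s, ¬ ∀ i, Gp s (u i) = w i} ≤ 52 := by
    have hgood : 12 ≤ Fintype.card {u : Fin 3 → Fin 4 // ∃ s, ∀ i, Gp s (u i) = w i} := by
      have hinj : Function.Injective
          (fun s : Fin 12 => (⟨fun i => Gpinv s (w i), ⟨s, fun i => Gp_inv s (w i)⟩⟩ :
            {u : Fin 3 → Fin 4 // ∃ s, ∀ i, Gp s (u i) = w i})) := by
        intro s t hst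
        have h0 := congrFun (congrArg Subtype.val hst) 0
        have h1 := congrFun (congrArg Subtype.val hst) 1
        have h2 := congrFun (congrArg Subtype.val hst) 2
        exact Gp_free s t (w 0) (w 1) (w 2) hw h0 h1 h2
      simpa using Fintype.card_le_of_injective _ hinj
    have heq : Fintype.card {u : Fin 3 → Fin 4 // ∀ s, ¬ ∀ i, Gp s (u i) = w i} =
        Fintype.card (Fin 3 → Fin 4) -
          Fintype.card {u : Fin 3 → Fin 4 // ∃ s, ∀ i, Gp s (u i) = w i} := by
      have := Fintype.card_congr (Equiv.subtypeEquivRight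
        (q := fun u : Fin 3 → Fin 4 => ¬ ∃ s, ∀ i, Gp s (u i) = w i)
        (p := fun u : Fin 3 → Fin 4 => ∀ s, ¬ ∀ i, Gp s (u i) = w i)
        (fun u => by push_neg; rfl))
      rw [this, Fintype.card_subtype_compl]
    have h64 : Fintype.card (Fin 3 → Fin 4) = 64 := by simp [Fintype.card_fun]
    rw [heq, h64]
    exact le_trans (Nat.sub_le_sub_left hgood 64) (by norm_num)
  calc Fintype.card {f : Fin n' → Fin 4 // ∀ s, ¬ ∀ i, Gp s (f (c i)) = w i}
      = Fintype.card {u : Fin 3 → Fin 4 // ∀ s, ¬ ∀ i, Gp s (u i) = w i} * 4 ^ (n' - 3) := key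
    _ ≤ 52 * 4 ^ (n' - 3) := Nat.mul_le_mul_right _ this

/-- The predicate: the pair `p = (c, w)` is "bad" for the base array `M`:
`c` injective, `w` nonconstant, and no permuted row of `M` covers `(c, w)`. -/
def badP (m n' : ℕ) (M : Fin m → Fin n' → Fin 4)
    (p : (Fin 3 → Fin n') × (Fin 3 → Fin 4)) : Prop :=
  Function.Injective p.1 ∧ ¬(p.2 0 = p.2 1 ∧ p.2 1 = p.2 2) ∧
    ∀ j s, ¬ ∀ i, Gp s (M j (p.1 i)) = p.2 i

instance (m n' : ℕ) (M : Fin m → Fin n' → Fin 4) : DecidablePred (badP m n' M) := fun p => by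
  unfold badP; infer_instance

lemma exists_good_base (n m : ℕ) (hn : 2 ≤ n) (hcond : 512 * n ^ 2 * 13 ^ m ≤ 16 ^ m) :
    ∃ M : Fin m → Fin (2 * n) → Fin 4,
      (Finset.univ.filter (badP m (2 * n) M)).card ≤ n := by
  classical
  set n' := 2 * n with hn'
  have h3 : 3 ≤ n' := by omega
  -- bound on the number of bad base arrays for a fixed pair
  have key : ∀ p : (Fin 3 → Fin n') × (Fin 3 → Fin 4),
      (Finset.univ.filter (fun M : Fin m → Fin n' → Fin 4 => badP m n' M p)).card ≤
        52 ^ m * 4 ^ ((n' - 3) * m) := by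
    intro p
    by_cases hp : Function.Injective p.1 ∧ ¬(p.2 0 = p.2 1 ∧ p.2 1 = p.2 2)
    · have hcongr : (Finset.univ.filter (fun M : Fin m → Fin n' → Fin 4 => badP m n' M p)).card =
          Fintype.card {M : Fin m → Fin n' → Fin 4 //
            ∀ j, (fun f => ∀ s, ¬ ∀ i, Gp s (f (p.1 i)) = p.2 i) (M j)} := by
        rw [← Fintype.card_subtype]
        exact Fintype.card_congr (Equiv.subtypeEquivRight (fun M => by
          unfold badP
          constructor
          · rintro ⟨_, _, h⟩ j; exact h j
          · intro h; exact ⟨hp.1, hp.2, h⟩))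
      rw [hcongr,
        pow_count (fun f : Fin n' → Fin 4 => ∀ s, ¬ ∀ i, Gp s (f (p.1 i)) = p.2 i)]
      calc Fintype.card {f : Fin n' → Fin 4 // ∀ s, ¬ ∀ i, Gp s (f (p.1 i)) = p.2 i} ^ m
          ≤ (52 * 4 ^ (n' - 3)) ^ m :=
            Nat.pow_le_pow_left (row_bound p.1 hp.1 p.2 hp.2) m
        _ = 52 ^ m * 4 ^ ((n' - 3) * m) := by rw [mul_pow, ← pow_mul]
    · have : (Finset.univ.filter (fun M : Fin m → Fin n' → Fin 4 => badP m n' M p)) = ∅ := by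
        apply Finset.filter_eq_empty_iff.mpr
        intro M _
        unfold badP
        rw [not_and_or] at hp ⊢
        rcases hp with h | h
        · exact Or.inl h
        · exact Or.inr (by rw [not_and_or]; exact Or.inl h)
      rw [this]
      exact Nat.zero_le _
  -- sum over all base arrays
  have swap : ∑ M : Fin m → Fin n' → Fin 4, (Finset.univ.filter (badP m n' M)).card
      = ∑ p : (Fin 3 → Fin n') × (Fin 3 → Fin 4),
          (Finset.univ.filter (fun M : Fin m → Fin n' → Fin 4 => badP m n' M p)).card := by
    simp only [Finset.card_filter]
    exact Finset.sum_comm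
  have total : ∑ M : Fin m → Fin n' → Fin 4, (Finset.univ.filter (badP m n' M)).card ≤
      (n' ^ 3 * 64) * (52 ^ m * 4 ^ ((n' - 3) * m)) := by
    rw [swap]
    calc ∑ p : (Fin 3 → Fin n') × (Fin 3 → Fin 4),
          (Finset.univ.filter (fun M : Fin m → Fin n' → Fin 4 => badP m n' M p)).card
        ≤ ∑ _p : (Fin 3 → Fin n') × (Fin 3 → Fin 4), 52 ^ m * 4 ^ ((n' - 3) * m) :=
          Finset.sum_le_sum (fun p _ => key p)
      _ = (n' ^ 3 * 64) * (52 ^ m * 4 ^ ((n' - 3) * m)) := by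
          rw [Finset.sum_const, Finset.card_univ, Fintype.card_prod, Fintype.card_fun,
            Fintype.card_fun, Fintype.card_fin, Fintype.card_fin, Fintype.card_fin]
          simp [smul_eq_mul]
  -- numeric comparison
  have numeric : (n' ^ 3 * 64) * (52 ^ m * 4 ^ ((n' - 3) * m)) ≤
      (Fintype.card (Fin m → Fin n' → Fin 4)) * n := by
    have hcard : Fintype.card (Fin m → Fin n' → Fin 4) = 4 ^ (n' * m) := by
      simp only [Fintype.card_fun, Fintype.card_fin]
      rw [← pow_mul]
    rw [hcard]
    have hsplit : n' * m = (n' - 3) * m + 3 * m := by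
      have h : n' - 3 + 3 = n' := by omega
      calc n' * m = ((n' - 3) + 3) * m := by rw [h]
        _ = (n' - 3) * m + 3 * m := by ring
    have e1 : (n' ^ 3 * 64) * (52 ^ m * 4 ^ ((n' - 3) * m)) =
        (512 * n ^ 2 * 13 ^ m) * (n * (4 ^ m * 4 ^ ((n' - 3) * m))) := by
      rw [hn']
      have h52 : (52 : ℕ) ^ m = 4 ^ m * 13 ^ m := by rw [← Nat.mul_pow]
      rw [h52]; ring
    calc (n' ^ 3 * 64) * (52 ^ m * 4 ^ ((n' - 3) * m))
        = (512 * n ^ 2 * 13 ^ m) * (n * (4 ^ m * 4 ^ ((n' - 3) * m))) := e1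
      _ ≤ 16 ^ m * (n * (4 ^ m * 4 ^ ((n' - 3) * m))) := Nat.mul_le_mul_right _ hcond
      _ = 4 ^ (n' * m) * n := by
          rw [hsplit, pow_add]
          have h4 : (4 : ℕ) ^ (3 * m) = 16 ^ m * 4 ^ m := by
            rw [← Nat.mul_pow, pow_mul]; norm_num
          rw [h4]; ring
  -- pigeonhole
  have hne : (Finset.univ : Finset (Fin m → Fin n' → Fin 4)).Nonempty :=
    Finset.univ_nonempty
  obtain ⟨M, _, hM⟩ := Finset.exists_le_of_sum_le hne
    (le_trans total (by
      rw [Finset.sum_const, Finset.card_univ, smul_eq_mul]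
      exact numeric) :
      ∑ M : Fin m → Fin n' → Fin 4, (Finset.univ.filter (badP m n' M)).card ≤
        ∑ _M : Fin m → Fin n' → Fin 4, n)
  exact ⟨M, hM⟩

lemma exists_array (n m : ℕ) (hn : 2 ≤ n) (hcond : 512 * n ^ 2 * 13 ^ m ≤ 16 ^ m) :
    ∃ M : Fin (12 * m + 4) → Fin n → Fin 4,
      ∀ c : Fin 3 → Fin n, Function.Injective c →
        ∀ w : Fin 3 → Fin 4, ∃ r, ∀ i, M r (c i) = w i := by
  classical
  obtain ⟨M, hM⟩ := exists_good_base n m hn hcond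
  -- delete bad columns
  set S : Finset (Fin (2 * n)) :=
    (Finset.univ.filter (badP m (2 * n) M)).image (fun p => p.1 0) with hS
  have hScard : S.card ≤ n := le_trans (Finset.card_image_le) hM
  have hcompl : n ≤ Sᶜ.card := by
    rw [Finset.card_compl, Fintype.card_fin]
    omega
  obtain ⟨T, hTsub, hTcard⟩ := Finset.exists_subset_card_eq hcompl
  let eT : Fin n ≃ T := ((Finset.equivFin T).trans (finCongr hTcard)).symm
  let e : Fin n → Fin (2 * n) := fun j => (eT j).1
  have he_inj : Function.Injective e :=
    fun a b hab => eT.injective (Subtype.ext hab)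
  have he_not : ∀ j, e j ∉ S := by
    intro j
    have := hTsub (eT j).2
    exact Finset.mem_compl.mp this
  -- assemble the array
  let R := Fin 4 ⊕ Fin 12 × Fin m
  have hcardR : Fintype.card R = 12 * m + 4 := by
    simp only [R, Fintype.card_sum, Fintype.card_prod, Fintype.card_fin]
    omega
  let eR : Fin (12 * m + 4) ≃ R := (Fintype.equivFinOfCardEq hcardR).symm
  let Mfin : R → Fin n → Fin 4 := fun r col =>
    match r with
    | .inl t => t
    | .inr (s, j) => Gp s (M j (e col))
  refine ⟨fun r col => Mfin (eR r) col, ?_⟩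
  intro c hc w
  by_cases hw : w 0 = w 1 ∧ w 1 = w 2
  · refine ⟨eR.symm (.inl (w 0)), ?_⟩
    intro i
    show Mfin (eR (eR.symm (.inl (w 0)))) (c i) = w i
    rw [Equiv.apply_symm_apply]
    show w 0 = w i
    fin_cases i
    · rfl
    · exact hw.1
    · exact hw.1.trans hw.2
  · have hnotbad : ¬ badP m (2 * n) M (e ∘ c, w) := by
      intro hbad
      have hmem : (e ∘ c, w) ∈ Finset.univ.filter (badP m (2 * n) M) :=
        Finset.mem_filter.mpr ⟨Finset.mem_univ _, hbad⟩
      have : e (c 0) ∈ S := by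
        rw [hS]
        exact Finset.mem_image.mpr ⟨(e ∘ c, w), hmem, rfl⟩
      exact he_not (c 0) this
    unfold badP at hnotbad
    push_neg at hnotbad
    have hinj : Function.Injective (e ∘ c) := he_inj.comp hc
    obtain ⟨j, s, hjs⟩ := hnotbad hinj (fun h1 h2 => hw ⟨h1, h2⟩)
    refine ⟨eR.symm (.inr (s, j)), ?_⟩
    intro i
    show Mfin (eR (eR.symm (.inr (s, j)))) (c i) = w i
    rw [Equiv.apply_symm_apply]
    exact hjs i

theorem covering_array_3_4 :
    ∀ ε : ℝ, 0 < ε → ∃ N : ℕ, ∀ n : ℕ, N ≤ n →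
      ∃ k : ℕ, (k : ℝ) ≤ 81.28 * (1 + ε) * (Real.log n / Real.log 2) ∧
        ∃ M : Fin k → Fin n → Fin 4,
          ∀ c : Fin 3 → Fin n, Function.Injective c →
            ∀ w : Fin 3 → Fin 4, ∃ r : Fin k, ∀ i : Fin 3, M r (c i) = w i := by
  intro ε hε
  refine ⟨⌈Real.exp 400⌉₊ + 2, ?_⟩
  intro n hn
  have hn2 : 2 ≤ n := by
    have h1 : (1 : ℝ) ≤ Real.exp 400 := by
      rw [← Real.exp_zero]
      exact Real.exp_le_exp.mpr (by norm_num)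
    have : 1 ≤ ⌈Real.exp 400⌉₊ := by
      rw [Nat.one_le_ceil_iff]
      linarith [Real.exp_pos (400 : ℝ)]
    omega
  have hnR2 : (2 : ℝ) ≤ (n : ℝ) := by exact_mod_cast hn2
  have hnpos : (0 : ℝ) < n := by linarith
  have hexp : Real.exp 400 ≤ (n : ℝ) := by
    calc Real.exp 400 ≤ (⌈Real.exp 400⌉₊ : ℝ) := Nat.le_ceil _
      _ ≤ (n : ℝ) := by exact_mod_cast le_trans (by omega : ⌈Real.exp 400⌉₊ ≤ ⌈Real.exp 400⌉₊ + 2) hn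
  have hL : (400 : ℝ) ≤ Real.log n := by
    rw [← Real.log_exp (400 : ℝ)]
    exact Real.log_le_log (Real.exp_pos _) hexp
  set L : ℝ := Real.log n with hLdef
  set ℓ : ℝ := Real.log 2 with hldef
  have hℓpos : 0 < ℓ := Real.log_pos one_lt_two
  have hℓub : ℓ < 0.6932 := lt_trans Real.log_two_lt_d9 (by norm_num)
  -- choose m
  set b : ℝ := 16 / 13 with hbdef
  have hb1 : (1 : ℝ) < b := by norm_num [hbdef]
  set X : ℝ := 512 * (n : ℝ) ^ 2 with hXdef
  have hX1 : (1 : ℝ) ≤ X := by nlinarith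
  have hXpos : (0 : ℝ) < X := by linarith
  set m : ℕ := ⌈Real.logb b X⌉₊ with hmdef
  -- the nat condition
  have hcond : 512 * n ^ 2 * 13 ^ m ≤ 16 ^ m := by
    have h1 : X ≤ b ^ (m : ℝ) :=
      (Real.logb_le_iff_le_rpow hb1 hXpos).mp (Nat.le_ceil _)
    rw [Real.rpow_natCast] at h1
    have h2 : X * 13 ^ m ≤ 16 ^ m := by
      have hb' : b ^ m * 13 ^ m = 16 ^ m := by
        rw [hbdef, div_pow, div_mul_cancel₀]
        positivity
      calc X * 13 ^ m ≤ b ^ m * 13 ^ m := by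
            apply mul_le_mul_of_nonneg_right h1 (by positivity)
        _ = 16 ^ m := hb'
    have := h2
    rw [hXdef] at this
    exact_mod_cast this
  refine ⟨12 * m + 4, ?_, ?_⟩
  · -- the size bound
    have hlogb_lb : 14 / 47 * ℓ ≤ Real.log b := by
      have hpow : (2 : ℝ) ^ (14 : ℕ) ≤ b ^ (47 : ℕ) := by
        rw [hbdef, div_pow, le_div_iff₀ (by positivity)]
        norm_num
      have := Real.log_le_log (by positivity) hpow
      rw [Real.log_pow, Real.log_pow] at this
      push_cast at this
      linarith
    have hlogb_pos : 0 < Real.log b := Real.log_pos hb1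
    have hlogX : Real.log X = 9 * ℓ + 2 * L := by
      rw [hXdef, Real.log_mul (by norm_num) (by positivity)]
      rw [Real.log_pow]
      have h512 : (512 : ℝ) = 2 ^ (9 : ℕ) := by norm_num
      rw [h512, Real.log_pow]
      push_cast
      ring
    have hlogX_nonneg : 0 ≤ Real.log X := Real.log_nonneg hX1
    have hlogb_nonneg : 0 ≤ Real.logb b X :=
      Real.logb_nonneg hb1 hX1
    have hm_ub : (m : ℝ) < Real.logb b X + 1 := Nat.ceil_lt_add_one hlogb_nonneg
    have hlogb_eq : Real.logb b X = Real.log X / Real.log b := rfl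
    have hdiv : Real.log X / Real.log b ≤ Real.log X / (14 / 47 * ℓ) :=
      div_le_div_of_nonneg_left hlogX_nonneg (by positivity) hlogb_lb
    set q : ℝ := Real.log X / (14 / 47 * ℓ) with hqdef
    have hm2 : (m : ℝ) ≤ q + 1 := by
      rw [hlogb_eq] at hm_ub
      linarith
    have hqℓ : q * ℓ = 47 / 14 * (9 * ℓ + 2 * L) := by
      rw [hqdef, hlogX]
      field_simp
    have hmain : (12 * (m : ℝ) + 4) * ℓ ≤ 81.28 * L := by
      have h1 : (12 * (m : ℝ) + 4) ≤ 12 * q + 16 := by linarith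
      have h2 : (12 * (m : ℝ) + 4) * ℓ ≤ (12 * q + 16) * ℓ :=
        mul_le_mul_of_nonneg_right h1 hℓpos.le
      have h3 : (12 * q + 16) * ℓ = 12 * (q * ℓ) + 16 * ℓ := by ring
      rw [h3, hqℓ] at h2
      nlinarith
    have hgoal1 : (12 * (m : ℝ) + 4) ≤ 81.28 * (L / ℓ) := by
      rw [← mul_div_assoc]
      exact (le_div_iff₀ hℓpos).mpr hmain
    have hLℓ : 0 ≤ L / ℓ := by positivity
    have : ((12 * m + 4 : ℕ) : ℝ) = 12 * (m : ℝ) + 4 := by push_cast; ring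
    rw [this]
    calc 12 * (m : ℝ) + 4 ≤ 81.28 * (L / ℓ) := hgoal1
      _ ≤ 81.28 * (1 + ε) * (L / ℓ) := by nlinarith
  · exact exists_array n m hn2 hcond
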